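/- On the boundary of the cusp Ω_{1,α} (i.e. where |x₂| = ½e^{−1/x₁^α}, x₁ > 0), the x₁-derivative of b_α computed from inside Ω_{1,α} equals α e^{−1/x₁^α}((3/4)x₁^{−1} + (5/4)x₁^{α−1}), which is nonnegative; moreover b_α < (5/4)2^{−α}e^{−2^α} in Ω_{1,α} ∩ Ω. -/

import Mathlib

open Real

/-- for B(x₁,x₂) = x₁^α e^{−1/x₁^α} + x₁^α e^{1/x₁^α}x₂² (the inner
expression of the barrier b_α), on the boundary of the cusp
{|x₂| = ½e^{−1/x₁^α}, x₁ > 0} the x₁-derivative computed from inside equals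
α e^{−1/x₁^α}((3/4)x₁^{−1} + (5/4)x₁^{α−1}) ≥ 0; moreover
b_α < (5/4)2^{−α}e^{−2^α} in Ω_{1,α} ∩ Ω. -/
theorem stmt_18 (α : ℝ) (hα : 0 < α)
    (B : ℝ × ℝ → ℝ)
    (hB : ∀ p : ℝ × ℝ, B p =
      p.1 ^ α * Real.exp (-1 / p.1 ^ α) + p.1 ^ α * Real.exp (1 / p.1 ^ α) * p.2 ^ 2) :
    (∀ p : ℝ × ℝ, 0 < p.1 → |p.2| = (1 / 2) * Real.exp (-1 / p.1 ^ α) →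
      fderiv ℝ B p (1, 0) =
          α * Real.exp (-1 / p.1 ^ α) * ((3 / 4) * p.1⁻¹ + (5 / 4) * p.1 ^ (α - 1)) ∧
        0 ≤ fderiv ℝ B p (1, 0)) ∧
    (∀ p : ℝ × ℝ, 0 < p.1 → p.1 ≤ 1 / 2 → |p.2| < (1 / 2) * Real.exp (-1 / p.1 ^ α) →
      B p < (5 / 4) * (2 : ℝ) ^ (-α) * Real.exp (-(2 : ℝ) ^ α)) := by
  have hBfun : B = fun p : ℝ × ℝ =>
      p.1 ^ α * Real.exp (-1 / p.1 ^ α) + p.1 ^ α * Real.exp (1 / p.1 ^ α) * p.2 ^ 2 :=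
    funext hB
  subst hBfun
  constructor
  · rintro ⟨x, y⟩ hx hy
    simp only at hx hy ⊢
    have hxa : (0:ℝ) < x ^ α := Real.rpow_pos_of_pos hx α
    have hE : (0:ℝ) < Real.exp (1 / x ^ α) := Real.exp_pos _
    -- 1-D derivatives
    have hr : HasDerivAt (fun t : ℝ => t ^ α) (α * x ^ (α - 1)) x := by
      simpa using Real.hasDerivAt_rpow_const (p := α) (Or.inl hx.ne')
    have hneg : HasDerivAt (fun t : ℝ => -1 / t ^ α)
        ((0 * x ^ α - (-1) * (α * x ^ (α - 1))) / (x ^ α) ^ 2) x :=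
      (hasDerivAt_const x (-1 : ℝ)).div hr hxa.ne'
    have hpos : HasDerivAt (fun t : ℝ => 1 / t ^ α)
        ((0 * x ^ α - 1 * (α * x ^ (α - 1))) / (x ^ α) ^ 2) x :=
      (hasDerivAt_const x (1 : ℝ)).div hr hxa.ne'
    have he1 : HasDerivAt (fun t : ℝ => Real.exp (-1 / t ^ α))
        (Real.exp (-1 / x ^ α) * ((0 * x ^ α - (-1) * (α * x ^ (α - 1))) / (x ^ α) ^ 2)) x :=
      hneg.exp
    have he2 : HasDerivAt (fun t : ℝ => Real.exp (1 / t ^ α))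
        (Real.exp (1 / x ^ α) * ((0 * x ^ α - 1 * (α * x ^ (α - 1))) / (x ^ α) ^ 2)) x :=
      hpos.exp
    have h1 := hr.mul he1
    have h2 := (hr.mul he2).mul_const (y ^ 2)
    have hD := h1.add h2
    -- differentiability of B at (x,y)
    have hd1 : DifferentiableAt ℝ (fun p : ℝ × ℝ => p.1 ^ α) (x, y) :=
      differentiableAt_fst.rpow_const (Or.inl hx.ne')
    have hd2a : DifferentiableAt ℝ (fun p : ℝ × ℝ => -1 / p.1 ^ α) (x, y) :=
      by simpa [div_eq_mul_inv, Pi.mul_def, Pi.inv_def] using (differentiableAt_const (-1:ℝ)).mul (hd1.inv hxa.ne')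
    have hd3a : DifferentiableAt ℝ (fun p : ℝ × ℝ => 1 / p.1 ^ α) (x, y) :=
      by simpa [div_eq_mul_inv, Pi.mul_def, Pi.inv_def] using (differentiableAt_const (1:ℝ)).mul (hd1.inv hxa.ne')
    have hd2 : DifferentiableAt ℝ (fun p : ℝ × ℝ => Real.exp (-1 / p.1 ^ α)) (x, y) := hd2a.exp
    have hd3 : DifferentiableAt ℝ (fun p : ℝ × ℝ => Real.exp (1 / p.1 ^ α)) (x, y) := hd3a.exp
    have hdB : DifferentiableAt ℝ (fun p : ℝ × ℝ =>
        p.1 ^ α * Real.exp (-1 / p.1 ^ α) + p.1 ^ α * Real.exp (1 / p.1 ^ α) * p.2 ^ 2)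
        (x, y) :=
      (hd1.mul hd2).add ((hd1.mul hd3).mul (differentiableAt_snd.pow 2))
    -- inclusion t ↦ (t, y)
    have hincl : HasDerivAt (fun t : ℝ => ((t, y) : ℝ × ℝ)) ((1:ℝ), (0:ℝ)) x :=
      (hasDerivAt_id x).prodMk (hasDerivAt_const x y)
    have hcomp := hdB.hasFDerivAt.comp_hasDerivAt x hincl
    have huniq := hcomp.unique hD
    have hfd : fderiv ℝ (fun p : ℝ × ℝ =>
        p.1 ^ α * Real.exp (-1 / p.1 ^ α) + p.1 ^ α * Real.exp (1 / p.1 ^ α) * p.2 ^ 2)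
        (x, y) (1, 0) =
        α * x ^ (α - 1) * Real.exp (-1 / x ^ α) +
          x ^ α * (Real.exp (-1 / x ^ α) *
            ((0 * x ^ α - (-1) * (α * x ^ (α - 1))) / (x ^ α) ^ 2)) +
        (α * x ^ (α - 1) * Real.exp (1 / x ^ α) +
          x ^ α * (Real.exp (1 / x ^ α) *
            ((0 * x ^ α - 1 * (α * x ^ (α - 1))) / (x ^ α) ^ 2))) * y ^ 2 := huniq
    have hy2 : y ^ 2 = (1/4) * Real.exp (-1 / x ^ α) ^ 2 := by
      have : y ^ 2 = |y| ^ 2 := (sq_abs y).symm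
      rw [this, hy]; ring
    have hxm : x ^ (α - 1) = x ^ α / x := by
      rw [Real.rpow_sub hx, Real.rpow_one]
    have hexp : Real.exp (-1 / x ^ α) = (Real.exp (1 / x ^ α))⁻¹ := by
      rw [neg_div, Real.exp_neg]
    have key : fderiv ℝ (fun p : ℝ × ℝ =>
        p.1 ^ α * Real.exp (-1 / p.1 ^ α) + p.1 ^ α * Real.exp (1 / p.1 ^ α) * p.2 ^ 2)
        (x, y) (1, 0) =
        α * Real.exp (-1 / x ^ α) * (3 / 4 * x⁻¹ + 5 / 4 * x ^ (α - 1)) := by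
      rw [hfd, hy2, hxm, hexp]
      field_simp
      ring
    refine ⟨key, ?_⟩
    rw [key]
    have h1 : (0:ℝ) ≤ 3 / 4 * x⁻¹ + 5 / 4 * x ^ (α - 1) := by
      have := Real.rpow_nonneg hx.le (α - 1)
      have := inv_nonneg.mpr hx.le
      positivity
    positivity
  · rintro ⟨x, y⟩ hx hx2 hy
    simp only at hx hx2 hy ⊢
    have hxa : (0:ℝ) < x ^ α := Real.rpow_pos_of_pos hx α
    have hE : (0:ℝ) < Real.exp (1 / x ^ α) := Real.exp_pos _
    have hEm : (0:ℝ) < Real.exp (-1 / x ^ α) := Real.exp_pos _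
    have hy2 : y ^ 2 < (1/4) * Real.exp (-1 / x ^ α) ^ 2 := by
      have h := mul_self_lt_mul_self (abs_nonneg y) hy
      rw [abs_mul_abs_self] at h
      calc y ^ 2 = y * y := sq y
        _ < (1 / 2 * Real.exp (-1 / x ^ α)) * (1 / 2 * Real.exp (-1 / x ^ α)) := h
        _ = (1/4) * Real.exp (-1 / x ^ α) ^ 2 := by ring
    have hexp : Real.exp (-1 / x ^ α) = (Real.exp (1 / x ^ α))⁻¹ := by
      rw [neg_div, Real.exp_neg]
    have step1 : x ^ α * Real.exp (-1 / x ^ α) + x ^ α * Real.exp (1 / x ^ α) * y ^ 2 <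
        (5/4) * (x ^ α * Real.exp (-1 / x ^ α)) := by
      have := mul_lt_mul_of_pos_left hy2 (mul_pos hxa hE)
      calc x ^ α * Real.exp (-1 / x ^ α) + x ^ α * Real.exp (1 / x ^ α) * y ^ 2
          < x ^ α * Real.exp (-1 / x ^ α) +
            x ^ α * Real.exp (1 / x ^ α) * ((1/4) * Real.exp (-1 / x ^ α) ^ 2) := by
            linarith [mul_lt_mul_of_pos_left hy2 (mul_pos hxa hE)]
        _ = (5/4) * (x ^ α * Real.exp (-1 / x ^ α)) := by
            rw [hexp]; field_simp; ring
    have hxa2 : x ^ α ≤ (2:ℝ) ^ (-α) := by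
      rw [Real.rpow_neg (by norm_num : (0:ℝ) ≤ 2), ← Real.inv_rpow (by norm_num : (0:ℝ) ≤ 2)]
      exact Real.rpow_le_rpow hx.le (by simpa using hx2) hα.le
    have hexple : Real.exp (-1 / x ^ α) ≤ Real.exp (-(2:ℝ) ^ α) := by
      rw [Real.exp_le_exp, neg_div, neg_le_neg_iff]
      rw [le_div_iff₀ hxa]
      calc (2:ℝ) ^ α * x ^ α ≤ (2:ℝ) ^ α * (2:ℝ) ^ (-α) := by
            exact mul_le_mul_of_nonneg_left hxa2 (Real.rpow_nonneg (by norm_num) α)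
        _ = 1 := by rw [← Real.rpow_add (by norm_num : (0:ℝ) < 2)]; simp
    calc x ^ α * Real.exp (-1 / x ^ α) + x ^ α * Real.exp (1 / x ^ α) * y ^ 2
        < (5/4) * (x ^ α * Real.exp (-1 / x ^ α)) := step1
      _ ≤ (5/4) * ((2:ℝ) ^ (-α) * Real.exp (-(2:ℝ) ^ α)) := by
          apply mul_le_mul_of_nonneg_left _ (by norm_num)
          exact mul_le_mul hxa2 hexple hEm.le (Real.rpow_nonneg (by norm_num) _)
      _ = 5 / 4 * (2:ℝ) ^ (-α) * Real.exp (-(2:ℝ) ^ α) := by ring
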